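/- Let $k \ge p \ge 1$ and let $A, B$ be $n \times d$ matrices with nonnegative entries such that $B = A + D$ for some nonnegative matrix $D$ (i.e., $A \le B$ entrywise). Define $G(X) = \left(\sum_{i=1}^n \left(\sum_{j=1}^d X_{i,j}^p\right)^{k/p}\right)^{1/k}$. If $G(A) \ge (1-\beta) G(B)$ for some $\beta \in [0,1]$, then $G(D) \le (k\beta)^{1/k} \cdot G(B)$. -/
import Mathlib

open Finset in
lemma real_add_rpow_le_rpow_add {x y q : ℝ} (hx : 0 ≤ x) (hy : 0 ≤ y) (hq : 1 ≤ q) :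
    x ^ q + y ^ q ≤ (x + y) ^ q := by
  lift x to NNReal using hx
  lift y to NNReal using hy
  have := NNReal.add_rpow_le_rpow_add x y hq
  exact_mod_cast this

open Finset in
theorem cascaded_norm_diff_bound (n d : ℕ) (k p β : ℝ) (hp : 1 ≤ p) (hkp : p ≤ k)
    (hβ0 : 0 ≤ β) (hβ1 : β ≤ 1)
    (A D : Fin n → Fin d → ℝ) (hA : ∀ i j, 0 ≤ A i j) (hD : ∀ i j, 0 ≤ D i j)
    (G : (Fin n → Fin d → ℝ) → ℝ)
    (hG : ∀ X, G X = (∑ i, (∑ j, (X i j) ^ p) ^ (k / p)) ^ (1 / k))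
    (h : (1 - β) * G (fun i j => A i j + D i j) ≤ G A) :
    G D ≤ (k * β) ^ (1 / k) * G (fun i j => A i j + D i j) := by
  have hk1 : (1:ℝ) ≤ k := hp.trans hkp
  have hk0 : (0:ℝ) < k := lt_of_lt_of_le one_pos hk1
  have hp0 : (0:ℝ) < p := lt_of_lt_of_le one_pos hp
  have hkp1 : (1:ℝ) ≤ k / p := (one_le_div hp0).mpr hkp
  set SA := ∑ i, (∑ j, (A i j) ^ p) ^ (k / p) with hSAdef
  set SD := ∑ i, (∑ j, (D i j) ^ p) ^ (k / p) with hSDdef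
  set SB := ∑ i, (∑ j, (A i j + D i j) ^ p) ^ (k / p) with hSBdef
  have hrowA : ∀ i, (0:ℝ) ≤ ∑ j, (A i j) ^ p := fun i =>
    Finset.sum_nonneg fun j _ => Real.rpow_nonneg (hA i j) p
  have hrowD : ∀ i, (0:ℝ) ≤ ∑ j, (D i j) ^ p := fun i =>
    Finset.sum_nonneg fun j _ => Real.rpow_nonneg (hD i j) p
  have hrowB : ∀ i, (0:ℝ) ≤ ∑ j, (A i j + D i j) ^ p := fun i =>
    Finset.sum_nonneg fun j _ => Real.rpow_nonneg (add_nonneg (hA i j) (hD i j)) p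
  have hSA0 : 0 ≤ SA := Finset.sum_nonneg fun i _ => Real.rpow_nonneg (hrowA i) _
  have hSD0 : 0 ≤ SD := Finset.sum_nonneg fun i _ => Real.rpow_nonneg (hrowD i) _
  have hSB0 : 0 ≤ SB := Finset.sum_nonneg fun i _ => Real.rpow_nonneg (hrowB i) _
  -- superadditivity: SA + SD ≤ SB
  have hsuper : SA + SD ≤ SB := by
    rw [hSAdef, hSDdef, hSBdef, ← Finset.sum_add_distrib]
    refine Finset.sum_le_sum fun i _ => ?_
    have h1 : (∑ j, (A i j) ^ p) + (∑ j, (D i j) ^ p) ≤ ∑ j, (A i j + D i j) ^ p := by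
      rw [← Finset.sum_add_distrib]
      exact Finset.sum_le_sum fun j _ =>
        real_add_rpow_le_rpow_add (hA i j) (hD i j) hp
    calc (∑ j, (A i j) ^ p) ^ (k/p) + (∑ j, (D i j) ^ p) ^ (k/p)
        ≤ ((∑ j, (A i j) ^ p) + (∑ j, (D i j) ^ p)) ^ (k/p) :=
          real_add_rpow_le_rpow_add (hrowA i) (hrowD i) hkp1
      _ ≤ (∑ j, (A i j + D i j) ^ p) ^ (k/p) :=
          Real.rpow_le_rpow (add_nonneg (hrowA i) (hrowD i)) h1
            (le_of_lt (div_pos hk0 hp0))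
  -- rewrite h
  rw [hG, hG] at h
  rw [hG, hG]
  -- (1-β)^k * SB ≤ SA
  have hβ' : (0:ℝ) ≤ 1 - β := by linarith
  have hpow : ((1 - β) * SB ^ (1/k)) ^ k ≤ (SA ^ (1/k)) ^ k :=
    Real.rpow_le_rpow (mul_nonneg hβ' (Real.rpow_nonneg hSB0 _)) h (le_of_lt hk0)
  have hInv : ∀ S : ℝ, 0 ≤ S → (S ^ (1/k)) ^ k = S := by
    intro S hS
    rw [← Real.rpow_mul hS, one_div, inv_mul_cancel₀ (ne_of_gt hk0), Real.rpow_one]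
  rw [Real.mul_rpow hβ' (Real.rpow_nonneg hSB0 _), hInv SA hSA0, hInv SB hSB0] at hpow
  -- Bernoulli
  have hbern : 1 + k * (-β) ≤ (1 + (-β)) ^ k :=
    one_add_mul_self_le_rpow_one_add (by linarith) hk1
  have hbern' : (1 - k * β) * SB ≤ (1 - β) ^ k * SB := by
    apply mul_le_mul_of_nonneg_right _ hSB0
    have : 1 + (-β) = 1 - β := by ring
    rw [this] at hbern; linarith
  have hSDle : SD ≤ k * β * SB := by nlinarith
  calc SD ^ (1/k) ≤ (k * β * SB) ^ (1/k) :=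
        Real.rpow_le_rpow hSD0 hSDle (by positivity)
    _ = (k * β) ^ (1/k) * SB ^ (1/k) :=
        Real.mul_rpow (by positivity) hSB0
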